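/- (Case II of Claim F) Let δ satisfy 5/8 < δ < 3/4 and set d = 2(1−δ). Let α = (3 − √5)/2 and let T : [0,1] → [0,1] be the rotation T(t) = t + α for t ∈ [0, 1−α), T(t) = t + α − 1 for t ∈ [1−α, 1]. Suppose u : [0,1] → [0,1] is continuous, nondecreasing and surjective, satisfies u ∘ g = T ∘ u, and u(t) = 1 − α if and only if t = d. Then for every interval J ⊆ [0,1] such that u(J) has positive length, there exists an integer k ≥ 0 with d ∈ g^k(J). -/
import Mathlib


/-- The piecewise-affine map `g : [0,1] → [0,1]`:
`g(t) = t/2 + δ` on `[0, 2(1−δ))` and `g(t) = t/2 + δ − 1` on `[2(1−δ), 1]`. -/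
noncomputable def gMap (δ : ℝ) (t : ℝ) : ℝ :=
  if t < 2 * (1 - δ) then t / 2 + δ else t / 2 + δ - 1

/-- `α = (3 − √5)/2`. -/
noncomputable def alphaRot : ℝ := (3 - Real.sqrt 5) / 2

/-- The rotation `T : [0,1] → [0,1]` by `α`:
`T(t) = t + α` on `[0, 1−α)` and `T(t) = t + α − 1` on `[1−α, 1]`. -/
noncomputable def Tmap (t : ℝ) : ℝ :=
  if t < 1 - alphaRot then t + alphaRot else t + alphaRot - 1

lemma sqrt5_bounds : 2 < Real.sqrt 5 ∧ Real.sqrt 5 < 3 := by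
  constructor
  · rw [show (2:ℝ) = Real.sqrt 4 by rw [show (4:ℝ) = 2^2 by norm_num, Real.sqrt_sq] <;> norm_num]
    exact Real.sqrt_lt_sqrt (by norm_num) (by norm_num)
  · rw [show (3:ℝ) = Real.sqrt 9 by rw [show (9:ℝ) = 3^2 by norm_num, Real.sqrt_sq] <;> norm_num]
    exact Real.sqrt_lt_sqrt (by norm_num) (by norm_num)

lemma alpha_bounds : 0 < alphaRot ∧ alphaRot < 1/2 := by
  obtain ⟨h1, h2⟩ := sqrt5_bounds
  constructor <;> (unfold alphaRot; linarith)

lemma gamma_irrational : Irrational (1 - alphaRot) := by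
  have h5 := Nat.Prime.irrational_sqrt (show Nat.Prime 5 by norm_num)
  rintro ⟨q, hq⟩
  refine h5 ⟨2*q + 1, ?_⟩
  unfold alphaRot at hq
  push_cast
  push_cast at hq
  linarith

/-- Subgroup generated by γ and 1. -/
def sgrp (γ : ℝ) : AddSubgroup ℝ where
  carrier := {x | ∃ s t : ℤ, x = s * γ + t}
  zero_mem' := ⟨0, 0, by norm_num⟩
  add_mem' := by
    rintro x y ⟨s1, t1, rfl⟩ ⟨s2, t2, rfl⟩
    exact ⟨s1 + s2, t1 + t2, by push_cast; ring⟩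
  neg_mem' := by
    rintro x ⟨s, t, rfl⟩
    exact ⟨-s, -t, by push_cast; ring⟩

lemma sgrp_dense {γ : ℝ} (hγ : Irrational γ) : Dense ((sgrp γ : Set ℝ)) := by
  rcases (sgrp γ).dense_or_cyclic with h | ⟨c, hc⟩
  · exact h
  · exfalso
    have hγm : γ ∈ sgrp γ := ⟨1, 0, by norm_num⟩
    have h1m : (1:ℝ) ∈ sgrp γ := ⟨0, 1, by norm_num⟩
    rw [hc, AddSubgroup.mem_closure_singleton] at hγm h1m
    obtain ⟨k, hk⟩ := hγm
    obtain ⟨l, hl⟩ := h1m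
    have hl0 : (l:ℝ) ≠ 0 := by
      intro h
      rw [zsmul_eq_mul, h, zero_mul] at hl
      norm_num at hl
    refine hγ ⟨(k : ℚ) / (l : ℚ), ?_⟩
    rw [zsmul_eq_mul] at hk hl
    have hc0 : c = 1 / (l:ℝ) := by field_simp; linarith
    push_cast
    rw [← hk, hc0]
    field_simp

/-- stepping lemma: a walk of step `x` hits any interval longer than `x`, modulo 1 shifts. -/
lemma walk_hits {x c d : ℝ} (hx : 0 < x) (hxd : x < d - c) :
    ∃ j : ℕ, 1 ≤ j ∧ ∃ m : ℤ, (j:ℝ) * x + m ∈ Set.Ioo c d := by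
  set M : ℤ := ⌈x - c⌉ with hM
  have hcM : x ≤ c + M := by
    have := Int.le_ceil (x - c)
    linarith
  have hcM0 : 0 < c + (M:ℝ) := lt_of_lt_of_le hx hcM
  have hex : ∃ j : ℕ, c + (M:ℝ) < j * x := by
    obtain ⟨j, hj⟩ := exists_nat_gt ((c + M) / x)
    exact ⟨j, by rwa [div_lt_iff₀ hx] at hj⟩
  classical
  set j0 := Nat.find hex with hj0
  have hP : c + (M:ℝ) < j0 * x := Nat.find_spec hex
  have h1 : j0 ≠ 0 := by
    intro h
    rw [h] at hP; norm_num at hP; linarith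
  have h1' : j0 ≠ 1 := by
    intro h
    rw [h] at hP; norm_num at hP; linarith
  have hj1 : 1 ≤ j0 - 1 := by omega
  have hprev : ¬ (c + (M:ℝ) < (j0 - 1 : ℕ) * x) := Nat.find_min hex (by omega)
  push_neg at hprev
  have hcast : ((j0 - 1 : ℕ) : ℝ) = (j0 : ℝ) - 1 := by
    have : 1 ≤ j0 := by omega
    push_cast [Nat.cast_sub this]
    ring
  rw [hcast] at hprev
  refine ⟨j0, by omega, -M, ?_, ?_⟩
  · push_cast; linarith
  · push_cast; nlinarith [hprev, hxd]

/-- Density of natural multiples of an irrational, mod 1. -/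
lemma exists_nat_mul_mem {γ a b : ℝ} (hγ : Irrational γ) (ha : 0 ≤ a) (hab : a < b)
    (hb : b ≤ 1) :
    ∃ (n : ℕ) (m : ℤ), 1 ≤ n ∧ (n:ℝ) * γ + m ∈ Set.Ioo a b := by
  have hdense := sgrp_dense hγ
  obtain ⟨z, hzS, hz⟩ := hdense.exists_mem_open isOpen_Ioo
    (Set.nonempty_Ioo.2 (show (0:ℝ) < b - a by linarith))
  obtain ⟨s, t, rfl⟩ := hzS
  have hs0 : s ≠ 0 := by
    rintro rfl
    simp only [Int.cast_zero, zero_mul, zero_add] at hz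
    have h1 : (0:ℝ) < t := hz.1
    have h2 : (t:ℝ) < b - a := hz.2
    have h3 : 1 ≤ t := by exact_mod_cast h1
    have h4 : (1:ℝ) ≤ t := by exact_mod_cast h3
    linarith
  rcases lt_or_gt_of_ne hs0 with hsneg | hspos
  · obtain ⟨j, hj1, m, hm⟩ := walk_hits (x := (s:ℝ)*γ + t) (c := -b) (d := -a) hz.1
      (by linarith [hz.2])
    have h1 : ((-s).toNat : ℤ) = -s := Int.toNat_of_nonneg (by omega)
    have hns : ((j * (-s).toNat : ℕ) : ℝ) = -((j:ℝ) * s) := by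
      have h2 : ((j * (-s).toNat : ℕ) : ℤ) = -((j:ℤ) * s) := by push_cast [h1]; ring
      exact_mod_cast h2
    have hm1 := hm.1
    have hm2 := hm.2
    refine ⟨j * (-s).toNat, -(j * t) - m, ?_, ?_, ?_⟩
    · have h3 : 1 ≤ (-s).toNat := by omega
      have h4 : 1 ≤ j := hj1
      calc 1 = 1 * 1 := by ring
        _ ≤ j * (-s).toNat := Nat.mul_le_mul h4 h3
    · rw [hns]; push_cast at hm2 ⊢; nlinarith
    · rw [hns]; push_cast at hm1 ⊢; nlinarith
  · obtain ⟨j, hj1, m, hm⟩ := walk_hits (x := (s:ℝ)*γ + t) (c := a) (d := b) hz.1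
      (by linarith [hz.2])
    have h1 : (s.toNat : ℤ) = s := Int.toNat_of_nonneg (by omega)
    have hns : ((j * s.toNat : ℕ) : ℝ) = (j:ℝ) * s := by
      have h2 : ((j * s.toNat : ℕ) : ℤ) = (j:ℤ) * s := by push_cast [h1]; ring
      exact_mod_cast h2
    have hm1 := hm.1
    have hm2 := hm.2
    refine ⟨j * s.toNat, j * t + m, ?_, ?_, ?_⟩
    · have h3 : 1 ≤ s.toNat := by omega
      calc 1 = 1 * 1 := by ring
        _ ≤ j * s.toNat := Nat.mul_le_mul hj1 h3
    · rw [hns]; push_cast at hm1 ⊢; nlinarith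
    · rw [hns]; push_cast at hm2 ⊢; nlinarith

lemma gMap_maps {δ : ℝ} (hδ1 : 5/8 < δ) (hδ2 : δ < 3/4) :
    ∀ t ∈ Set.Icc (0:ℝ) 1, gMap δ t ∈ Set.Icc (0:ℝ) 1 := by
  intro t ht
  unfold gMap
  split_ifs with h
  · constructor <;> [linarith [ht.1]; linarith [h]]
  · push_neg at h
    constructor <;> [linarith [h]; linarith [ht.2]]

lemma Tmap_fract {z : ℝ} (hz : z ∈ Set.Ico (0:ℝ) 1) : Tmap z = Int.fract (z + alphaRot) := by
  obtain ⟨ha0, ha1⟩ := alpha_bounds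
  unfold Tmap
  split_ifs with h
  · rw [Int.fract_eq_self.2 ⟨by linarith [hz.1], by linarith⟩]
  · push_neg at h
    rw [← Int.fract_sub_intCast (z + alphaRot) 1]
    rw [show z + alphaRot - (1:ℤ) = z + alphaRot - 1 by push_cast; ring]
    exact (Int.fract_eq_self.2 ⟨by linarith, by linarith [hz.2]⟩).symm

lemma Tmap_iter {z : ℝ} (hz : z ∈ Set.Ico (0:ℝ) 1) (k : ℕ) :
    Tmap^[k] z = Int.fract (z + k * alphaRot) := by
  induction k with
  | zero => simp [Int.fract_eq_self.2 ⟨hz.1, hz.2⟩]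
  | succ k ih =>
    rw [Function.iterate_succ_apply', ih]
    have hmem : Int.fract (z + k * alphaRot) ∈ Set.Ico (0:ℝ) 1 :=
      ⟨Int.fract_nonneg _, Int.fract_lt_one _⟩
    rw [Tmap_fract hmem]
    rw [show Int.fract (z + k * alphaRot) + alphaRot
      = (z + (↑(k+1) : ℕ) * alphaRot) + (-⌊z + k * alphaRot⌋ : ℤ) by
        rw [Int.fract]; push_cast; ring]
    rw [Int.fract_add_intCast]

/-- Case II of Claim F: let `5/8 < δ < 3/4` and `d = 2(1−δ)`. Suppose
`u : [0,1] → [0,1]` is continuous, nondecreasing and surjective, satisfies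
`u ∘ g = T ∘ u`, and `u(t) = 1 − α` iff `t = d`. Then for every interval `J ⊆ [0,1]`
such that `u(J)` has positive length, there exists `k ≥ 0` with `d ∈ g^k(J)`. -/
theorem caseII (δ : ℝ) (hδ1 : 5 / 8 < δ) (hδ2 : δ < 3 / 4)
    (u : ℝ → ℝ)
    (humaps : Set.MapsTo u (Set.Icc (0 : ℝ) 1) (Set.Icc (0 : ℝ) 1))
    (hucont : ContinuousOn u (Set.Icc (0 : ℝ) 1))
    (humono : MonotoneOn u (Set.Icc (0 : ℝ) 1))
    (husurj : u '' Set.Icc (0 : ℝ) 1 = Set.Icc (0 : ℝ) 1)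
    (huconj : ∀ t ∈ Set.Icc (0 : ℝ) 1, u (gMap δ t) = Tmap (u t))
    (hud : ∀ t ∈ Set.Icc (0 : ℝ) 1, (u t = 1 - alphaRot ↔ t = 2 * (1 - δ)))
    (J : Set ℝ) (hJsub : J ⊆ Set.Icc (0 : ℝ) 1) (hJord : J.OrdConnected)
    (hlen : ∃ a ∈ u '' J, ∃ b ∈ u '' J, a < b) :
    ∃ k : ℕ, 2 * (1 - δ) ∈ (gMap δ)^[k] '' J := by
  obtain ⟨a, ⟨t1, ht1J, ht1u⟩, b, ⟨t2, ht2J, ht2u⟩, hab⟩ := hlen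
  subst ht1u ht2u
  have ht1 : t1 ∈ Set.Icc (0:ℝ) 1 := hJsub ht1J
  have ht2 : t2 ∈ Set.Icc (0:ℝ) 1 := hJsub ht2J
  have ht12 : t1 ≤ t2 := by
    by_contra h
    push_neg at h
    exact absurd (humono ht2 ht1 h.le) (not_le.2 hab)
  have ha0 : 0 ≤ u t1 := (humaps ht1).1
  have hb1 : u t2 ≤ 1 := (humaps ht2).2
  -- density step
  obtain ⟨n, m, hn1, hy⟩ := exists_nat_mul_mem (γ := 1 - alphaRot) gamma_irrational ha0 hab hb1
  set y : ℝ := (n:ℝ) * (1 - alphaRot) + m with hydef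
  -- IVT
  have hsub : Set.Icc t1 t2 ⊆ Set.Icc (0:ℝ) 1 := Set.Icc_subset_Icc ht1.1 ht2.2
  have hivt : Set.Icc (u t1) (u t2) ⊆ u '' Set.Icc t1 t2 :=
    intermediate_value_Icc ht12 (hucont.mono hsub)
  obtain ⟨s, hs, hus⟩ := hivt ⟨hy.1.le, hy.2.le⟩
  have hsJ : s ∈ J := hJord.out ht1J ht2J hs
  have hs01 : s ∈ Set.Icc (0:ℝ) 1 := hJsub hsJ
  -- iterated conjugacy
  have giter : ∀ k : ℕ, ∀ t ∈ Set.Icc (0:ℝ) 1,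
      (gMap δ)^[k] t ∈ Set.Icc (0:ℝ) 1 ∧ u ((gMap δ)^[k] t) = Tmap^[k] (u t) := by
    intro k
    induction k with
    | zero => intro t ht; simp [ht]
    | succ k ih =>
      intro t ht
      obtain ⟨hmem, heq⟩ := ih t ht
      rw [Function.iterate_succ_apply', Function.iterate_succ_apply']
      exact ⟨gMap_maps hδ1 hδ2 _ hmem, by rw [huconj _ hmem, heq]⟩
  set k := n - 1 with hk
  obtain ⟨hgk_mem, hgk_eq⟩ := giter k s hs01
  have hy01 : y ∈ Set.Ico (0:ℝ) 1 := ⟨le_trans ha0 hy.1.le, lt_of_lt_of_le hy.2 hb1⟩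
  have hkcast : (k : ℝ) = (n : ℝ) - 1 := by
    rw [hk]
    push_cast [Nat.cast_sub hn1]
    ring
  have hTval : Tmap^[k] y = 1 - alphaRot := by
    rw [Tmap_iter hy01, hydef]
    have : (n:ℝ) * (1 - alphaRot) + m + k * alphaRot
        = (1 - alphaRot) + ((n : ℤ) + m - 1 : ℤ) := by
      rw [hkcast]; push_cast; ring
    rw [this, Int.fract_add_intCast, Int.fract_eq_self.2
      ⟨by linarith [alpha_bounds.2], by linarith [alpha_bounds.1]⟩]
  have hfinal : u ((gMap δ)^[k] s) = 1 - alphaRot := by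
    rw [hgk_eq, hus, hTval]
  have := (hud _ hgk_mem).1 hfinal
  exact ⟨k, s, hsJ, this⟩
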